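/- For any nonnegative integer r, the function μ ↦ e^{-μ} μ^r / ∫_0^μ e^{-t} t^r dt is decreasing in μ on (0, ∞). -/

import Mathlib

open MeasureTheory

theorem lower_gamma_ratio_decreasing (r : ℕ) :
    AntitoneOn
      (fun μ : ℝ => Real.exp (-μ) * μ ^ r / ∫ t in (0 : ℝ)..μ, Real.exp (-t) * t ^ r)
      (Set.Ioi 0) := by
  intro a ha b hb hab
  simp only [Set.mem_Ioi] at ha hb
  have hcont : Continuous fun t : ℝ => Real.exp (-t) * t ^ r := by continuity
  have hint : ∀ x y : ℝ, IntervalIntegrable (fun t => Real.exp (-t) * t ^ r) volume x y :=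
    fun x y => hcont.intervalIntegrable x y
  have hIpos : ∀ x : ℝ, 0 < x → 0 < ∫ t in (0:ℝ)..x, Real.exp (-t) * t ^ r := by
    intro x hx
    refine intervalIntegral.intervalIntegral_pos_of_pos_on (hint 0 x) ?_ hx
    intro t ht
    exact mul_pos (Real.exp_pos _) (pow_pos ht.1 r)
  simp only
  rw [div_le_div_iff₀ (hIpos b hb) (hIpos a ha)]
  set c := b / a with hc
  have hc1 : (1:ℝ) ≤ c := (one_le_div ha).2 hab
  have hc0 : c ≠ 0 := by positivity
  have hb_eq : b = c * a := by rw [hc]; field_simp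
  have hIb : (∫ t in (0:ℝ)..b, Real.exp (-t) * t ^ r)
      = c * ∫ s in (0:ℝ)..a, Real.exp (-(c*s)) * (c*s)^r := by
    rw [intervalIntegral.integral_comp_mul_left (fun t => Real.exp (-t) * t ^ r) hc0,
      mul_zero, ← hb_eq, smul_eq_mul, ← mul_assoc, mul_inv_cancel₀ hc0, one_mul]
  have hR : Real.exp (-a) * a ^ r * (c * ∫ s in (0:ℝ)..a, Real.exp (-(c*s)) * (c*s)^r)
      = ∫ s in (0:ℝ)..a, (Real.exp (-a) * a ^ r * c) * (Real.exp (-(c*s)) * (c*s)^r) := by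
    rw [intervalIntegral.integral_const_mul]; ring
  rw [hIb, hR, ← intervalIntegral.integral_const_mul]
  apply intervalIntegral.integral_mono_on (le_of_lt ha)
  · exact (hint 0 a).const_mul _
  · have : Continuous fun s : ℝ => Real.exp (-(c*s)) * (c*s)^r :=
      (Real.continuous_exp.comp (continuous_const.mul continuous_id).neg).mul
        ((continuous_const.mul continuous_id).pow r)
    exact (this.intervalIntegrable 0 a).const_mul _
  · intro s hs
    have hsa : s ≤ a := hs.2
    have hs0 : 0 ≤ s := hs.1
    have hexp : Real.exp (-b) * Real.exp (-s) ≤ Real.exp (-a) * Real.exp (-(c*s)) := by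
      rw [← Real.exp_add, ← Real.exp_add]
      apply Real.exp_le_exp.2
      nlinarith [mul_le_mul_of_nonneg_left hsa (sub_nonneg.2 hc1)]
    have hcr : (c*s)^r = c^r * s^r := mul_pow c s r
    have habr : a ^ r * c ^ r = b ^ r := by rw [← mul_pow, mul_comm a c, ← hb_eq]
    have h1 : (1:ℝ) ≤ c := hc1
    calc Real.exp (-b) * b ^ r * (Real.exp (-s) * s ^ r)
        = (Real.exp (-b) * Real.exp (-s)) * (b ^ r * s ^ r) := by ring
      _ ≤ (Real.exp (-a) * Real.exp (-(c*s))) * (b ^ r * s ^ r) := by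
          apply mul_le_mul_of_nonneg_right hexp (by positivity)
      _ ≤ c * ((Real.exp (-a) * Real.exp (-(c*s))) * (b ^ r * s ^ r)) := by
          nlinarith [mul_pos (Real.exp_pos (-a)) (Real.exp_pos (-(c*s))),
            pow_nonneg (le_of_lt (lt_of_lt_of_le ha hab)) r, pow_nonneg hs0 r,
            mul_nonneg (mul_nonneg (le_of_lt (Real.exp_pos (-a))) (le_of_lt (Real.exp_pos (-(c*s))))) (mul_nonneg (pow_nonneg (le_of_lt (lt_of_lt_of_le ha hab)) r) (pow_nonneg hs0 r))]
      _ = Real.exp (-a) * a ^ r * c * (Real.exp (-(c*s)) * (c*s)^r) := by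
          rw [hcr, ← habr]; ring
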